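/- Let n ≥ 1 and let A : Matrix (Fin n) (Fin n) ℂ be a matrix whose characteristic polynomial has n pairwise distinct complex roots. Let a : Fin n → ℂ be such that for every μ : ℂ and every u : Fin n → ℂ with u ≠ 0 and A.mulVec u = μ • u, the dot product a ⬝ᵥ u is nonzero. If x : Fin n → ℂ and C : Matrix (Fin n) (Fin n) ℂ satisfy Matrix.vecMulVec x a = C * A − A * C, then x = 0. -/

import Mathlib

open Matrix Polynomial

/-- If the characteristic polynomial of `A` has `n` pairwise
distinct roots and `a` pairs nontrivially with every eigenvector of `A`, then
a rank-one matrix `x aᵀ` can only be a commutator `[C, A]` if `x = 0`. -/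
theorem vecMulVec_commutator_eq_zero (n : ℕ) (hn : 1 ≤ n)
    (A : Matrix (Fin n) (Fin n) ℂ)
    (hroots : ∃ f : Fin n → ℂ, Function.Injective f ∧
      A.charpoly = ∏ i, (X - Polynomial.C (f i)))
    (a : Fin n → ℂ)
    (ha : ∀ (μ : ℂ) (u : Fin n → ℂ), u ≠ 0 → A.mulVec u = μ • u →
      dotProduct a u ≠ 0)
    (x : Fin n → ℂ) (C : Matrix (Fin n) (Fin n) ℂ)
    (h : Matrix.vecMulVec x a = C * A - A * C) : x = 0 := by
  obtain ⟨f, hf, hchar⟩ := hroots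
  -- Step 1: for every polynomial p, a ⬝ᵥ (aeval A p).mulVec x = 0
  have key : ∀ p : Polynomial ℂ, dotProduct a ((aeval A p).mulVec x) = 0 := by
    intro p
    set M := aeval A p with hM
    have hcomm : A * M = M * A := by
      have h1 : M * A = aeval A (p * X) := by simp [hM, _root_.map_mul]
      have h2 : A * M = aeval A (X * p) := by simp [hM, _root_.map_mul]
      rw [h1, h2, mul_comm p X]
    have htr : dotProduct a (M.mulVec x) = Matrix.trace (Matrix.vecMulVec x a * M) := by
      simp only [Matrix.trace, Matrix.diag, Matrix.mul_apply, Matrix.vecMulVec_apply,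
        dotProduct, Matrix.mulVec, Finset.mul_sum]
      rw [Finset.sum_comm]
      apply Finset.sum_congr rfl
      intro i _
      apply Finset.sum_congr rfl
      intro j _
      ring
    rw [htr, h, sub_mul, Matrix.trace_sub]
    have : A * C * M = A * (C * M) := by rw [mul_assoc]
    rw [this, Matrix.trace_mul_comm A (C * M), mul_assoc, hcomm, ← mul_assoc]
    exact sub_self _
  -- Step 2: Lagrange projections kill x
  have proj : ∀ i : Fin n, (aeval A (Lagrange.basis Finset.univ f i)).mulVec x = 0 := by
    intro i
    set P := aeval A (Lagrange.basis Finset.univ f i) with hP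
    by_contra hne
    have hpoly : (X - Polynomial.C (f i)) * Lagrange.basis Finset.univ f i
        = Polynomial.C (∏ j ∈ Finset.univ.erase i, (f i - f j)⁻¹) * A.charpoly := by
      rw [hchar, Lagrange.basis]
      unfold Lagrange.basisDivisor
      rw [Finset.prod_mul_distrib, ← Finset.mul_prod_erase Finset.univ
        (fun j => X - Polynomial.C (f j)) (Finset.mem_univ i), map_prod]
      ring
    have haev := congrArg (aeval A) hpoly
    rw [_root_.map_mul, _root_.map_mul, Matrix.aeval_self_charpoly, mul_zero, map_sub, aeval_X, aeval_C] at haev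
    have heig : A.mulVec (P.mulVec x) = f i • P.mulVec x := by
      have h1 : (A - algebraMap ℂ (Matrix (Fin n) (Fin n) ℂ) (f i)) * P = 0 := haev
      have h2 : A * P = algebraMap ℂ (Matrix (Fin n) (Fin n) ℂ) (f i) * P := by
        have h1' : A * P - algebraMap ℂ (Matrix (Fin n) (Fin n) ℂ) (f i) * P = 0 := by
          rw [← sub_mul]; exact h1
        exact sub_eq_zero.mp h1'
      calc A.mulVec (P.mulVec x) = (A * P).mulVec x := by rw [Matrix.mulVec_mulVec]
        _ = (algebraMap ℂ (Matrix (Fin n) (Fin n) ℂ) (f i) * P).mulVec x := by rw [h2]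
        _ = f i • P.mulVec x := by
            rw [Algebra.algebraMap_eq_smul_one, smul_mul_assoc, one_mul, Matrix.smul_mulVec]
    exact ha (f i) (P.mulVec x) hne heig (key _)
  -- Step 3: sum of projections is the identity
  have hsum : ∑ i : Fin n, Lagrange.basis Finset.univ f i = 1 :=
    Lagrange.sum_basis hf.injOn ⟨⟨0, hn⟩, Finset.mem_univ _⟩
  have : x = (aeval A (∑ i : Fin n, Lagrange.basis Finset.univ f i)).mulVec x := by
    rw [hsum]; simp
  have hsm : (∑ i : Fin n, aeval A (Lagrange.basis Finset.univ f i)) *ᵥ x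
      = ∑ i : Fin n, (aeval A (Lagrange.basis Finset.univ f i)) *ᵥ x := by
    ext j
    simp only [Matrix.mulVec, dotProduct, Finset.sum_apply, Matrix.sum_apply,
      Finset.sum_mul]
    rw [Finset.sum_comm]
  rw [this, map_sum, hsm]
  simp only [proj]
  simp
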